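/- Let n ≥ 3, A a unital semi-prime Banach algebra with the inner derivation property, and Δ a 2-local derivation on M_n(A) vanishing on the span of the matrix units. Then there exists a diagonal matrix ã ∈ M_n(A) such that Δ agrees with ad(ã) on all diagonal matrices, and ad(ã) vanishes on the linear span of the matrix units. -/

import Mathlib

open Matrix

def IsDerivation {A : Type*} [Ring A] [Algebra ℂ A] (D : A → A) : Prop :=
  (∀ x y, D (x + y) = D x + D y) ∧ (∀ (c : ℂ) (x), D (c • x) = c • D x) ∧
  (∀ x y, D (x * y) = D x * y + x * D y)

def Is2LocalDerivation {A : Type*} [Ring A] [Algebra ℂ A] (Δ : A → A) : Prop :=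
  ∀ x y, ∃ D, IsDerivation D ∧ Δ x = D x ∧ Δ y = D y

def HasInnerDerivationProperty (A : Type*) [Ring A] [Algebra ℂ A] : Prop :=
  ∀ D : A → A, IsDerivation D → ∃ a : A, ∀ x, D x = a * x - x * a

/-- `Δ` vanishes on the linear span of the matrix units. -/
def VanishesOnUnits {A : Type*} [Ring A] [Algebra ℂ A] {n : ℕ}
    (Δ : Matrix (Fin n) (Fin n) A → Matrix (Fin n) (Fin n) A) : Prop :=
  ∀ x ∈ Submodule.span ℂ (Set.range fun p : Fin n × Fin n =>
      Matrix.single p.1 p.2 (1 : A)), Δ x = 0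
def IsSemiprime (A : Type*) [Ring A] : Prop :=
  ∀ a : A, (∀ x : A, a * x * a = 0) → a = 0


section Basics
variable {B : Type*} [Ring B] [Algebra ℂ B]

lemma myderiv_zero {D : B → B} (hD : IsDerivation D) : D 0 = 0 := by
  have h := hD.1 0 0
  rw [add_zero] at h
  exact add_eq_left.mp h.symm

lemma myderiv_sub {D : B → B} (hD : IsDerivation D) (x y : B) :
    D (x - y) = D x - D y := by
  have h := hD.1 (x - y) y
  rw [sub_add_cancel] at h
  rw [eq_sub_iff_add_eq, ← h]

lemma myderiv_sum {D : B → B} (hD : IsDerivation D) {ι : Type*} (s : Finset ι) (f : ι → B) :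
    D (∑ i ∈ s, f i) = ∑ i ∈ s, D (f i) := by
  classical
  induction s using Finset.induction_on with
  | empty => simpa using myderiv_zero hD
  | insert _ _ h ih => rw [Finset.sum_insert h, Finset.sum_insert h, hD.1, ih]

lemma isDerivation_inner (a : B) : IsDerivation (fun x => a * x - x * a) := by
  refine ⟨fun x y => by noncomm_ring, fun c x => ?_, fun x y => by noncomm_ring⟩
  simp [mul_smul_comm, smul_mul_assoc, smul_sub]

lemma isDerivation_sub_inner {D : B → B} (hD : IsDerivation D) (a : B) :
    IsDerivation (fun x => D x - (a * x - x * a)) := by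
  obtain ⟨h1, h2, h3⟩ := hD
  refine ⟨fun x y => ?_, fun c x => ?_, fun x y => ?_⟩
  · simp only; rw [h1]; noncomm_ring
  · simp only; rw [h2]; simp [mul_smul_comm, smul_mul_assoc, smul_sub, smul_smul]
  · simp only; rw [h3]; noncomm_ring

end Basics

section Inner

variable {A : Type*} [Ring A] [Algebra ℂ A] {n : ℕ}


lemma mulE (i j k l : Fin n) :
    (single i j (1:A) : Matrix (Fin n) (Fin n) A) * single k l (1:A) = if j = k then single i l (1:A) else 0 := by
  split_ifs with h
  · subst h; rw [single_mul_single_same, one_mul]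
  · exact single_mul_single_of_ne _ _ _ _ h _

lemma sumE_one : (∑ k, single k k (1:A) : Matrix (Fin n) (Fin n) A) = 1 := by
  ext i j
  simp only [Matrix.sum_apply, Matrix.one_apply, single, of_apply]
  by_cases h : i = j
  · subst h; simp [Finset.sum_ite_eq]
  · simp only [if_neg h]
    refine Finset.sum_eq_zero fun k _ => ?_
    by_cases hk : k = i
    · subst hk; simp [h]
    · simp [hk]

lemma corner_proj (z : Fin n) (Y : Matrix (Fin n) (Fin n) A) :
    (single z z (1:A) : Matrix (Fin n) (Fin n) A) * Y * single z z (1:A) = single z z (Y z z) := by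
  ext a b
  rcases eq_or_ne z a with rfl | haz
  · rcases eq_or_ne z b with rfl | hbz
    · rw [mul_single_apply_same, single_mul_apply_same,
        single_apply_same]
      simp
    · rw [mul_single_apply_of_ne _ _ _ _ _ hbz.symm,
        single_apply_of_col_ne _ _ hbz]
  · rw [Matrix.mul_apply]
    have hz : ∀ k, ((single z z (1:A) : Matrix (Fin n) (Fin n) A) * Y) a k = 0 := fun k =>
      single_mul_apply_of_ne _ _ _ _ _ haz.symm _
    simp only [hz, zero_mul, Finset.sum_const_zero]
    rw [single_apply_of_row_ne haz]

/-- Every derivation of `Mₙ(A)` is inner, given the inner derivation property for `A`. -/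
theorem deriv_matrix_inner (hidp : HasInnerDerivationProperty A) (hn : 0 < n)
    (D : Matrix (Fin n) (Fin n) A → Matrix (Fin n) (Fin n) A) (hD : IsDerivation D) :
    ∃ m, ∀ x, D x = m * x - x * m := by
  classical
  obtain ⟨hD1, hD2, hD3⟩ := hD
  have hDzero : D 0 = 0 := myderiv_zero ⟨hD1, hD2, hD3⟩
  set z : Fin n := ⟨0, hn⟩ with hz
  set a : Matrix (Fin n) (Fin n) A := ∑ k, D (single k z (1:A)) * single z k (1:A) with ha
  have hEE : (single z z (1:A) : Matrix (Fin n) (Fin n) A) * single z z (1:A) = single z z (1:A) := by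
    rw [mulE]; simp
  -- corner fact
  have hcorner : (single z z (1:A) : Matrix (Fin n) (Fin n) A) * D (single z z (1:A)) * single z z (1:A) = 0 := by
    set X := (single z z (1:A) : Matrix (Fin n) (Fin n) A) * D (single z z (1:A)) * single z z (1:A) with hX
    have h := hD3 (single z z (1:A)) (single z z (1:A))
    rw [single_mul_single_same, mul_one] at h
    have hXr : X * single z z (1:A) = X := by
      rw [hX, mul_assoc (single z z (1:A) * D (single z z (1:A))) _ _, hEE]
    have hXl : (single z z (1:A) : Matrix (Fin n) (Fin n) A) * X = X := by
      rw [hX, ← mul_assoc, ← mul_assoc, hEE]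
    have h3 := congrArg (fun y => (single z z (1:A) : Matrix (Fin n) (Fin n) A) * y * single z z (1:A)) h
    have h4 : X = X * single z z (1:A) + single z z (1:A) * X := by
      rw [hX]
      conv_lhs => rw [h3]
      simp only [hX, mul_add, add_mul, mul_assoc]
    rw [hXr, hXl] at h4
    exact add_eq_left.mp h4.symm
  have hcorner' : ∀ i j : Fin n,
      (single i z (1:A) : Matrix (Fin n) (Fin n) A) * D (single z z (1:A)) * single z j (1:A) = 0 := by
    intro i j
    have e1 : (single i z (1:A) : Matrix (Fin n) (Fin n) A) = single i z (1:A) * single z z (1:A) := by rw [mulE]; simp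
    have e2 : (single z j (1:A) : Matrix (Fin n) (Fin n) A) = single z z (1:A) * single z j (1:A) := by rw [mulE]; simp
    calc (single i z (1:A) : Matrix (Fin n) (Fin n) A) * D (single z z (1:A)) * single z j (1:A)
        = single i z (1:A) * ((single z z (1:A) * D (single z z (1:A)) * single z z (1:A))) * single z j (1:A) := by
          conv_lhs => rw [e1, e2]
          noncomm_ring
      _ = 0 := by rw [hcorner]; simp
  -- D agrees with ad(a) on matrix units
  have hC1 : ∀ i j : Fin n, D (single i j (1:A)) = a * single i j (1:A) - single i j (1:A) * a := by
    intro i j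
    have hXDY : ∀ X Y : Matrix (Fin n) (Fin n) A, X * D Y = D (X * Y) - D X * Y := by
      intro X Y; rw [hD3]; abel
    have hsum1 : a * single i j (1:A) = D (single i z (1:A)) * single z j (1:A) := by
      rw [ha, Finset.sum_mul]
      rw [Finset.sum_eq_single i]
      · rw [mul_assoc, mulE]; simp
      · intro k _ hk
        rw [mul_assoc, mulE, if_neg hk, mul_zero]
      · intro h; exact absurd (Finset.mem_univ i) h
    have hsum2 : single i j (1:A) * a = - (single i z (1:A) * D (single z j (1:A))) := by
      rw [ha, Finset.mul_sum]
      have hterm : ∀ k : Fin n, (single i j (1:A) : Matrix (Fin n) (Fin n) A) * (D (single k z (1:A)) * single z k (1:A))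
          = single i z (1:A) * D ((if j = k then (single z z (1:A) : Matrix (Fin n) (Fin n) A) else 0)) * single z k (1:A)
            - single i z (1:A) * (D (single z j (1:A)) * (single k z (1:A) * single z k (1:A))) := by
        intro k
        have eij : (single i j (1:A) : Matrix (Fin n) (Fin n) A) = single i z (1:A) * single z j (1:A) := by rw [mulE]; simp
        rw [eij, mul_assoc, ← mul_assoc (single z j (1:A)) _ _, hXDY (single z j (1:A)) (single k z (1:A)), mulE]
        rw [sub_mul, mul_sub]
        simp only [mul_assoc]
      rw [Finset.sum_congr rfl (fun k _ => hterm k)]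
      rw [Finset.sum_sub_distrib]
      have h1 : ∑ k : Fin n, (single i z (1:A) : Matrix (Fin n) (Fin n) A) *
          D (if j = k then (single z z (1:A) : Matrix (Fin n) (Fin n) A) else 0) * single z k (1:A) = 0 := by
        rw [Finset.sum_eq_single j]
        · rw [if_pos rfl]; exact hcorner' i j
        · intro k _ hk
          rw [if_neg (Ne.symm hk), hDzero, mul_zero, zero_mul]
        · intro h; exact absurd (Finset.mem_univ j) h
      have h2 : ∑ k : Fin n, (single i z (1:A) : Matrix (Fin n) (Fin n) A) *
          (D (single z j (1:A)) * (single k z (1:A) * single z k (1:A))) = single i z (1:A) * D (single z j (1:A)) := by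
        have he : ∀ k : Fin n, (single k z (1:A) : Matrix (Fin n) (Fin n) A) * single z k (1:A) = single k k (1:A) := by
          intro k; rw [mulE]; simp
        simp_rw [he]
        rw [← Finset.mul_sum, ← Finset.mul_sum, sumE_one, mul_one]
      rw [h1, h2, zero_sub]
    rw [hsum1, hsum2, sub_neg_eq_add]
    have eij : (single i j (1:A) : Matrix (Fin n) (Fin n) A) = single i z (1:A) * single z j (1:A) := by rw [mulE]; simp
    rw [eij, hD3]
  -- the corrected derivation vanishing on units
  set D2 : Matrix (Fin n) (Fin n) A → Matrix (Fin n) (Fin n) A :=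
    fun x => D x - (a * x - x * a) with hD2def
  have hD2 : IsDerivation D2 := isDerivation_sub_inner ⟨hD1, hD2, hD3⟩ a
  have hD2E : ∀ i j : Fin n, D2 (single i j (1:A)) = 0 := by
    intro i j; rw [hD2def]; simp only; rw [hC1 i j]; abel
  have step : ∀ P Q R : Matrix (Fin n) (Fin n) A, D2 P = 0 → D2 R = 0 →
      D2 (P * Q * R) = P * D2 Q * R := by
    intro P Q R hP hR
    rw [hD2.2.2 (P*Q) R, hR, mul_zero, add_zero, hD2.2.2 P Q, hP, zero_mul, zero_add]
  -- the corner derivation on A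
  set d : A → A := fun b => (D2 (single z z b)) z z with hd
  have hstd : ∀ b : A, D2 (single z z b) = single z z (d b) := by
    intro b
    have e0 : (single z z b : Matrix (Fin n) (Fin n) A)
        = single z z (1:A) * single z z b * single z z (1:A) := by
      rw [corner_proj, single_apply_same]
    conv_lhs => rw [e0]
    rw [step _ _ _ (hD2E z z) (hD2E z z), corner_proj]
  have hsingle : ∀ (i j : Fin n) (b : A),
      D2 (single i j b) = single i j (d b) := by
    intro i j b
    have e1 : (single i j b : Matrix (Fin n) (Fin n) A)
        = single i z (1:A) * single z z b * single z j (1:A) := by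
      rw [single_mul_single_same, one_mul, single_mul_single_same, mul_one]
    rw [e1, step _ _ _ (hD2E i z) (hD2E z j), hstd b, single_mul_single_same, one_mul,
      single_mul_single_same, mul_one]
  have hdDeriv : IsDerivation d := by
    refine ⟨fun b b' => ?_, fun c b => ?_, fun b b' => ?_⟩
    · show (D2 (single z z (b + b'))) z z = _
      rw [single_add, hD2.1, Matrix.add_apply]
    · show (D2 (single z z (c • b))) z z = _
      rw [← smul_single, hD2.2.1, Matrix.smul_apply]
    · have e2 : D2 (single z z (b * b'))
          = single z z (d b * b' + b * d b') := by
        rw [show (single z z (b * b') : Matrix (Fin n) (Fin n) A)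
              = single z z b * single z z b' from
            (single_mul_single_same _ _ _ _ _).symm]
        rw [hD2.2.2, hstd b, hstd b', single_mul_single_same, single_mul_single_same,
          single_add]
      show (D2 (single z z (b * b'))) z z = _
      rw [e2, single_apply_same]
  obtain ⟨c, hc⟩ := hidp d hdDeriv
  -- D2 is entrywise ad(c)
  have hD2x : ∀ x : Matrix (Fin n) (Fin n) A,
      D2 x = Matrix.diagonal (fun _ => c) * x - x * Matrix.diagonal (fun _ => c) := by
    intro x
    conv_lhs => rw [matrix_eq_sum_single x]
    rw [myderiv_sum hD2]
    have hrow : ∀ i : Fin n, D2 (∑ j, single i j (x i j))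
        = ∑ j, single i j (d (x i j)) := by
      intro i
      rw [myderiv_sum hD2, Finset.sum_congr rfl (fun j _ => hsingle i j (x i j))]
    rw [Finset.sum_congr rfl (fun i _ => hrow i)]
    ext i j
    rw [Matrix.sub_apply, Matrix.sum_apply]
    simp only [Matrix.sum_apply]
    have hentry : ∀ k : Fin n, (∑ l, single k l (d (x k l)) i j)
        = if k = i then d (x i j) else 0 := by
      intro k
      by_cases hk : k = i
      · subst hk
        rw [if_pos rfl, Finset.sum_eq_single j]
        · rw [single_apply_same]
        · intro l _ hl
          exact single_apply_of_col_ne _ _ hl _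
        · intro h; exact absurd (Finset.mem_univ j) h
      · rw [if_neg hk]
        refine Finset.sum_eq_zero fun l _ => ?_
        exact single_apply_of_row_ne hk _ _ _
    rw [Finset.sum_congr rfl (fun k _ => hentry k), Finset.sum_ite_eq' Finset.univ i _]
    simp only [Finset.mem_univ, if_true]
    rw [hc, Matrix.mul_apply, Matrix.mul_apply]
    simp [Matrix.diagonal_apply, Finset.sum_ite_eq, Finset.sum_ite_eq', ite_mul, mul_ite]
  refine ⟨a + Matrix.diagonal (fun _ => c), fun x => ?_⟩
  have hx := hD2x x
  rw [hD2def] at hx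
  simp only at hx
  have h := sub_eq_iff_eq_add.mp hx
  rw [h]
  noncomm_ring

end Inner

section Main

variable {A : Type*} [Ring A] [Algebra ℂ A] {n : ℕ}

/-- scalar matrix built from a complex coefficient function -/
def scal (A : Type*) [Ring A] [Algebra ℂ A] {n : ℕ} (f : Fin n × Fin n → ℂ) :
    Matrix (Fin n) (Fin n) A :=
  ∑ p : Fin n × Fin n, f p • single p.1 p.2 (1 : A)

lemma scal_mem (f : Fin n × Fin n → ℂ) :
    scal A f ∈ Submodule.span ℂ (Set.range fun p : Fin n × Fin n =>
      Matrix.single p.1 p.2 (1 : A)) :=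
  Submodule.sum_mem _ fun p _ =>
    Submodule.smul_mem _ _ (Submodule.subset_span ⟨p, rfl⟩)

lemma scal_apply (f : Fin n × Fin n → ℂ) (i j : Fin n) :
    scal A f i j = f (i, j) • (1 : A) := by
  rw [scal, Matrix.sum_apply]
  rw [Finset.sum_eq_single (i, j)]
  · simp
  · intro p _ hp
    rw [Matrix.smul_apply, single_apply_of_ne, smul_zero]
    intro ⟨h1, h2⟩
    exact hp (Prod.ext h1.symm h2.symm).symm
  · intro h; exact absurd (Finset.mem_univ _) h

lemma scal_mul_apply (f : Fin n × Fin n → ℂ) (m : Matrix (Fin n) (Fin n) A) (i j : Fin n) :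
    (scal A f * m) i j = ∑ k, f (i, k) • m k j := by
  rw [Matrix.mul_apply]
  refine Finset.sum_congr rfl fun k _ => ?_
  rw [scal_apply, smul_mul_assoc, one_mul]

lemma mul_scal_apply (f : Fin n × Fin n → ℂ) (m : Matrix (Fin n) (Fin n) A) (i j : Fin n) :
    (m * scal A f) i j = ∑ k, f (k, j) • m i k := by
  rw [Matrix.mul_apply]
  refine Finset.sum_congr rfl fun k _ => ?_
  rw [scal_apply, mul_smul_comm, mul_one]

lemma smul_cancel {c : ℂ} (hc : c ≠ 0) {B : Type*} [AddCommGroup B] [Module ℂ B]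
    {b : B} (h : c • b = 0) : b = 0 := by
  have := congrArg (fun y => c⁻¹ • y) h
  simpa [smul_smul, inv_mul_cancel₀ hc] using this

lemma mul_diag_right (m x : Matrix (Fin n) (Fin n) A)
    (hx : ∀ i j : Fin n, i ≠ j → x i j = 0) (i j : Fin n) :
    (m * x) i j = m i j * x j j := by
  rw [Matrix.mul_apply]
  rw [Finset.sum_eq_single j]
  · intro k _ hk; rw [hx k j hk, mul_zero]
  · intro h; exact absurd (Finset.mem_univ _) h

lemma mul_diag_left (m x : Matrix (Fin n) (Fin n) A)
    (hx : ∀ i j : Fin n, i ≠ j → x i j = 0) (i j : Fin n) :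
    (x * m) i j = x i i * m i j := by
  rw [Matrix.mul_apply]
  rw [Finset.sum_eq_single i]
  · intro k _ hk; rw [hx i k (Ne.symm hk), zero_mul]
  · intro h; exact absurd (Finset.mem_univ _) h

end Main

theorem stmt10 {A : Type*} [NormedRing A] [NormedAlgebra ℂ A] [CompleteSpace A]
    (hsp : IsSemiprime A) (hidp : HasInnerDerivationProperty A)
    {n : ℕ} (hn : 3 ≤ n)
    (Δ : Matrix (Fin n) (Fin n) A → Matrix (Fin n) (Fin n) A)
    (hΔ : Is2LocalDerivation Δ) (hvan : VanishesOnUnits Δ) :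
    ∃ a : Matrix (Fin n) (Fin n) A,
      (∀ i j : Fin n, i ≠ j → a i j = 0) ∧
      (∀ x : Matrix (Fin n) (Fin n) A,
        (∀ i j : Fin n, i ≠ j → x i j = 0) → Δ x = a * x - x * a) ∧
      (∀ z ∈ Submodule.span ℂ (Set.range fun p : Fin n × Fin n =>
          Matrix.single p.1 p.2 (1 : A)), a * z - z * a = 0) := by
  classical
  have hn0 : 0 < n := by omega
  -- 2-locality with *inner* derivations
  have hpair : ∀ x y : Matrix (Fin n) (Fin n) A,
      ∃ m, Δ x = m * x - x * m ∧ Δ y = m * y - y * m := by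
    intro x y
    obtain ⟨D, hD, hx, hy⟩ := hΔ x y
    obtain ⟨m, hm⟩ := deriv_matrix_inner hidp hn0 D hD
    exact ⟨m, hx.trans (hm x), hy.trans (hm y)⟩
  set v : Matrix (Fin n) (Fin n) A :=
    scal A (fun p => if p.1 = p.2 then ((p.1 : ℕ) : ℂ) else 0) with hv
  set w : Matrix (Fin n) (Fin n) A :=
    scal A (fun p => if (p.1 : ℕ) + 1 = (p.2 : ℕ) then 1 else 0) with hw
  have hΔv : Δ v = 0 := hvan _ (scal_mem _)
  have hΔw : Δ w = 0 := hvan _ (scal_mem _)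
  -- Step 1 : Δ maps diagonals to diagonals
  have hoff : ∀ x : Matrix (Fin n) (Fin n) A, (∀ i j : Fin n, i ≠ j → x i j = 0) →
      ∀ i j : Fin n, i ≠ j → Δ x i j = 0 := by
    intro x hx i j hij
    obtain ⟨m, hmx, hmv⟩ := hpair x v
    rw [hΔv] at hmv
    have hcm : m * v = v * m := sub_eq_zero.mp hmv.symm
    have hm0 : m i j = 0 := by
      have h := congrArg (fun y => y i j) hcm
      rw [hv, mul_scal_apply, scal_mul_apply] at h
      simp only [ite_smul, zero_smul] at h
      rw [Finset.sum_ite_eq' Finset.univ j (fun k => ((k : ℕ) : ℂ) • m i k),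
        Finset.sum_ite_eq Finset.univ i (fun k => ((i : ℕ) : ℂ) • m k j)] at h
      simp only [Finset.mem_univ, if_true] at h
      have hsub : (((j : ℕ) : ℂ) - ((i : ℕ) : ℂ)) • m i j = 0 := by
        rw [sub_smul, h, sub_self]
      have hne : ((j : ℕ) : ℂ) ≠ ((i : ℕ) : ℂ) := by
        intro hh
        exact hij (Fin.ext (Nat.cast_injective hh).symm)
      exact smul_cancel (sub_ne_zero.mpr hne) hsub
    rw [hmx, Matrix.sub_apply, mul_diag_right m x hx, mul_diag_left m x hx, hm0,
      zero_mul, mul_zero, sub_self]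
  -- Step 2 : on a diagonal x, Δ is implemented on the diagonal by a single element
  have hP1 : ∀ x : Matrix (Fin n) (Fin n) A, (∀ i j : Fin n, i ≠ j → x i j = 0) →
      ∃ c : A, ∀ i : Fin n, Δ x i i = c * x i i - x i i * c := by
    intro x hx
    obtain ⟨m, hmx, hmw⟩ := hpair x w
    rw [hΔw] at hmw
    have hcm : m * w = w * m := sub_eq_zero.mp hmw.symm
    have hstep : ∀ (k : ℕ) (hk : k + 1 < n),
        m ⟨k, by omega⟩ ⟨k, by omega⟩ = m ⟨k+1, hk⟩ ⟨k+1, hk⟩ := by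
      intro k hk
      have h := congrArg (fun y => y (⟨k, by omega⟩ : Fin n) (⟨k+1, hk⟩ : Fin n)) hcm
      rw [hw, mul_scal_apply, scal_mul_apply] at h
      simp only [ite_smul, zero_smul, one_smul] at h
      rw [Finset.sum_eq_single (⟨k, by omega⟩ : Fin n), Finset.sum_eq_single (⟨k+1, hk⟩ : Fin n)] at h
      · simpa using h
      · intro t _ ht
        rw [if_neg]
        intro hh
        exact ht (Fin.ext (by simpa using hh.symm))
      · intro hmem; exact absurd (Finset.mem_univ _) hmem
      · intro t _ ht
        rw [if_neg]
        intro hh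
        exact ht (Fin.ext (by simpa using hh))
      · intro hmem; exact absurd (Finset.mem_univ _) hmem
    have hconstN : ∀ (k : ℕ) (hk : k < n), m ⟨k, hk⟩ ⟨k, hk⟩ = m ⟨0, hn0⟩ ⟨0, hn0⟩ := by
      intro k
      induction k with
      | zero => intro hk; rfl
      | succ k ih => intro hk; rw [← hstep k hk]; exact ih (by omega)
    have hconst : ∀ i : Fin n, m i i = m ⟨0, hn0⟩ ⟨0, hn0⟩ := by
      intro i
      have := hconstN i.val i.isLt
      simpa using this
    refine ⟨m ⟨0, hn0⟩ ⟨0, hn0⟩, fun i => ?_⟩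
    rw [hmx, Matrix.sub_apply, mul_diag_right m x hx, mul_diag_left m x hx, ← hconst i]
  -- diagonal matrices have zero off-diagonal entries
  have hdiag0 : ∀ (g : Fin n → A) (i j : Fin n), i ≠ j → Matrix.diagonal g i j = 0 :=
    fun g i j h => Matrix.diagonal_apply_ne g h
  set z0 : Fin n := ⟨0, hn0⟩ with hz0
  set z1 : Fin n := ⟨1, by omega⟩ with hz1
  set z2 : Fin n := ⟨2, by omega⟩ with hz2
  have h10 : z1 ≠ z0 := by simp [hz0, hz1, Fin.ext_iff]
  have h20 : z2 ≠ z0 := by simp [hz0, hz2, Fin.ext_iff]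
  have h21 : z2 ≠ z1 := by simp [hz1, hz2, Fin.ext_iff]
  set δ : A → A := fun b => Δ (Matrix.diagonal fun _ => b) z0 z0 with hδ
  -- the diagonal entries of Δ x depend only on the corresponding entry of x
  have hF1 : ∀ x : Matrix (Fin n) (Fin n) A, (∀ i j : Fin n, i ≠ j → x i j = 0) →
      ∀ i : Fin n, Δ x i i = δ (x i i) := by
    intro x hx i
    have hy : ∀ i' j' : Fin n, i' ≠ j' → Matrix.diagonal (fun _ => x i i) i' j' = 0 :=
      hdiag0 _
    obtain ⟨m, hmx, hmy⟩ := hpair x (Matrix.diagonal fun _ => x i i)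
    have h1 : Δ x i i = m i i * x i i - x i i * m i i := by
      rw [hmx, Matrix.sub_apply, mul_diag_right m x hx, mul_diag_left m x hx]
    have h2 : Δ (Matrix.diagonal fun _ => x i i) i i = m i i * x i i - x i i * m i i := by
      rw [hmy, Matrix.sub_apply, mul_diag_right m _ hy, mul_diag_left m _ hy,
        Matrix.diagonal_apply_eq]
    obtain ⟨c, hc⟩ := hP1 (Matrix.diagonal fun _ => x i i) hy
    have h3 := hc i
    have h4 := hc z0
    rw [Matrix.diagonal_apply_eq] at h3 h4
    rw [h1, ← h2, h3, ← h4, hδ]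
  -- δ is a derivation on A
  have hδd : IsDerivation δ := by
    refine ⟨fun b b' => ?_, fun μ b => ?_, fun b b' => ?_⟩
    · set q : Matrix (Fin n) (Fin n) A :=
        Matrix.diagonal (fun k => if k = z0 then b else if k = z1 then b' else b + b') with hqd
      have hq : ∀ i j : Fin n, i ≠ j → q i j = 0 := hdiag0 _
      obtain ⟨c, hc⟩ := hP1 q hq
      have e0 := (hF1 q hq z0).symm.trans (hc z0)
      have e1 := (hF1 q hq z1).symm.trans (hc z1)
      have e2 := (hF1 q hq z2).symm.trans (hc z2)
      rw [hqd] at e0 e1 e2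
      rw [Matrix.diagonal_apply_eq, if_pos rfl] at e0
      rw [Matrix.diagonal_apply_eq, if_neg h10, if_pos rfl] at e1
      rw [Matrix.diagonal_apply_eq, if_neg h20, if_neg h21] at e2
      rw [e0, e1, e2]
      noncomm_ring
    · set q : Matrix (Fin n) (Fin n) A :=
        Matrix.diagonal (fun k => if k = z0 then b else μ • b) with hqd
      have hq : ∀ i j : Fin n, i ≠ j → q i j = 0 := hdiag0 _
      obtain ⟨c, hc⟩ := hP1 q hq
      have e0 := (hF1 q hq z0).symm.trans (hc z0)
      have e1 := (hF1 q hq z1).symm.trans (hc z1)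
      rw [hqd] at e0 e1
      rw [Matrix.diagonal_apply_eq, if_pos rfl] at e0
      rw [Matrix.diagonal_apply_eq, if_neg h10] at e1
      rw [e0, e1]
      simp [mul_smul_comm, smul_mul_assoc, smul_sub]
    · set q : Matrix (Fin n) (Fin n) A :=
        Matrix.diagonal (fun k => if k = z0 then b else if k = z1 then b' else b * b') with hqd
      have hq : ∀ i j : Fin n, i ≠ j → q i j = 0 := hdiag0 _
      obtain ⟨c, hc⟩ := hP1 q hq
      have e0 := (hF1 q hq z0).symm.trans (hc z0)
      have e1 := (hF1 q hq z1).symm.trans (hc z1)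
      have e2 := (hF1 q hq z2).symm.trans (hc z2)
      rw [hqd] at e0 e1 e2
      rw [Matrix.diagonal_apply_eq, if_pos rfl] at e0
      rw [Matrix.diagonal_apply_eq, if_neg h10, if_pos rfl] at e1
      rw [Matrix.diagonal_apply_eq, if_neg h20, if_neg h21] at e2
      rw [e0, e1, e2]
      noncomm_ring
  obtain ⟨c₀, hc₀⟩ := hidp δ hδd
  refine ⟨Matrix.diagonal (fun _ => c₀), fun i j hij => Matrix.diagonal_apply_ne _ hij,
    fun x hx => ?_, fun zz hzz => ?_⟩
  · ext i j
    rw [Matrix.sub_apply, Matrix.diagonal_mul, Matrix.mul_diagonal]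
    rcases eq_or_ne i j with rfl | hij
    · rw [hF1 x hx i, hc₀]
    · rw [hoff x hx i j hij, hx i j hij, mul_zero, zero_mul, sub_self]
  · induction hzz using Submodule.span_induction with
    | mem u hu =>
      obtain ⟨p, rfl⟩ := hu
      ext i j
      simp only [Matrix.sub_apply, Matrix.diagonal_mul, Matrix.mul_diagonal,
        Matrix.zero_apply, single, Matrix.of_apply]
      split_ifs <;> simp
    | zero => simp
    | add u t hu ht hu' ht' =>
      have := congrArg₂ (· + ·) hu' ht'
      simpa [mul_add, add_mul, sub_add_sub_comm] using this
    | smul r u hu hu' =>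
      rw [mul_smul_comm, smul_mul_assoc, ← smul_sub, hu', smul_zero]
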